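/- Let N ∈ ℕ, let a be coprime to N with multiplicative order m modulo N, and let p be a prime dividing N. If gcd(N, a^(m/r) - 1) = 1 for every prime r dividing m, then p ≡ 1 (mod m). -/

import Mathlib

theorem stmt_4 (N : ℕ) (a : ℤ) (ha : Int.gcd a N = 1)
    (m : ℕ) (hm : m = orderOf (a : ZMod N))
    (p : ℕ) (hp : p.Prime) (hpN : p ∣ N)
    (h : ∀ r : ℕ, r.Prime → r ∣ m → Int.gcd (N : ℤ) (a ^ (m / r) - 1) = 1) :
    p ≡ 1 [MOD m] := by
  haveI : Fact p.Prime := ⟨hp⟩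
  -- handle N = 0 separately
  rcases Nat.eq_zero_or_pos N with hN | hN
  · subst hN
    have ha' : a.natAbs = 1 := by simpa [Int.gcd] using ha
    rcases Int.natAbs_eq_iff.mp ha' with h1 | h1
    · subst h1
      have : m = 1 := by simpa using hm
      simp [this, Nat.ModEq, Nat.mod_one]
    · subst h1
      have hm2 : m = 2 := by
        rw [hm]
        norm_num
      have := h 2 Nat.prime_two (by omega)
      rw [hm2] at this
      norm_num [Int.gcd] at this
  -- main case N > 0
  haveI : NeZero N := ⟨hN.ne'⟩
  have hunit : IsUnit (a : ZMod N) := by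
    have hc : IsCoprime a (N : ℤ) := Int.isCoprime_iff_gcd_eq_one.mpr ha
    have h2 := hc.map (Int.castRingHom (ZMod N))
    exact isCoprime_zero_right.mp (by simpa using h2)
  have hmpos : 0 < m := by
    rw [hm, ← hunit.unit_spec, orderOf_units]
    exact orderOf_pos _
  have hbm : (a : ZMod p) ^ m = 1 := by
    have h1 : (a : ZMod N) ^ m = 1 := by rw [hm]; exact pow_orderOf_eq_one _
    have h2 := congrArg (ZMod.castHom hpN (ZMod p)) h1
    simpa only [map_pow, map_intCast, map_one] using h2
  have hdvd : orderOf (a : ZMod p) ∣ m := orderOf_dvd_of_pow_eq_one hbm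
  have horder : orderOf (a : ZMod p) = m := by
    by_contra hne
    obtain ⟨k, hk⟩ := hdvd
    have hk1 : k ≠ 1 := by rintro rfl; simp at hk; exact hne hk.symm
    obtain ⟨r, hr, hrk⟩ := Nat.exists_prime_and_dvd hk1
    have hrm : r ∣ m := hk ▸ (hrk.mul_left _)
    have hod : orderOf (a : ZMod p) ∣ m / r := by
      obtain ⟨j, hj⟩ := hrk
      refine ⟨j, ?_⟩
      rw [hk, hj, mul_comm r j, ← mul_assoc, Nat.mul_div_cancel _ hr.pos]
    have hb1 : (a : ZMod p) ^ (m / r) = 1 := orderOf_dvd_iff_pow_eq_one.mp hod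
    have hpd : (p : ℤ) ∣ a ^ (m / r) - 1 := by
      have h0 : ((a ^ (m / r) - 1 : ℤ) : ZMod p) = 0 := by push_cast [hb1]; ring
      exact (ZMod.intCast_zmod_eq_zero_iff_dvd _ _).mp h0
    have hg : (p : ℤ) ∣ (Int.gcd (N : ℤ) (a ^ (m / r) - 1) : ℤ) :=
      Int.dvd_coe_gcd (Int.natCast_dvd_natCast.mpr hpN) hpd
    rw [h r hr hrm] at hg
    have : (p : ℤ) ∣ 1 := by simpa using hg
    have := Int.le_of_dvd one_pos this
    have := hp.two_le
    omega
  have hb0 : (a : ZMod p) ≠ 0 := by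
    intro hb
    rw [hb, zero_pow hmpos.ne'] at hbm
    exact zero_ne_one hbm
  have hflt : (a : ZMod p) ^ (p - 1) = 1 := ZMod.pow_card_sub_one_eq_one hb0
  have hmp : m ∣ p - 1 := horder ▸ orderOf_dvd_of_pow_eq_one hflt
  exact ((Nat.modEq_iff_dvd' hp.one_le).mpr hmp).symm
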